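/- Let (D,d) be a noncomplete rectifiably connected metric space that is length a-John with center x₀. Then for every x₁ ∈ D there is a rectifiable curve α joining x₁ to x₀ such that for all y ∈ α, ℓ_k(α[x₁,y]) ≤ b₁·|log(d(y)/d(x₁))| + b₂, where b₁ = a and b₂ = (3 + log(2a))·a. -/

import Mathlib

open Set Metric ENNReal

noncomputable section

variable {X : Type*} [MetricSpace X] {Y : Type*} [MetricSpace Y]

/-- Distance from a point `z` to the boundary of `D`, modeled as the distance
to the complement of `D`. -/
def bdist (D : Set X) (z : X) : ℝ := Metric.infDist z Dᶜ

/-- Distance from a set `A` to the boundary of `D`. -/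
def setBdist (D A : Set X) : ℝ := sInf (bdist D '' A)

/-- Quasihyperbolic length (variation) of `f` over the parameter set `s`, the
discretized version of `∫_γ |dz| / dist(z, ∂D)`. -/
def qhVariationOn (D : Set X) (f : ℝ → X) (s : Set ℝ) : ℝ≥0∞ :=
  ⨆ p : ℕ × { u : ℕ → ℝ // Monotone u ∧ ∀ i, u i ∈ s },
    ∑ i ∈ Finset.range p.1,
      edist (f (p.2.1 (i + 1))) (f (p.2.1 i)) /
        max (ENNReal.ofReal (bdist D (f (p.2.1 i))))
            (ENNReal.ofReal (bdist D (f (p.2.1 (i + 1)))))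

/-- `f : [0,1] → D` is a curve in `D` from `x` to `y`. -/
structure IsCurveIn (D : Set X) (f : ℝ → X) (x y : X) : Prop where
  cont : ContinuousOn f (Icc 0 1)
  mem : ∀ t ∈ Icc (0 : ℝ) 1, f t ∈ D
  source : f 0 = x
  target : f 1 = y

/-- Every pair of points of `D` can be joined by a rectifiable curve in `D`. -/
def RectifiablyConnected (D : Set X) : Prop :=
  ∀ x ∈ D, ∀ y ∈ D, ∃ f : ℝ → X, IsCurveIn D f x y ∧ eVariationOn f (Icc 0 1) < ⊤

/-- The quasihyperbolic distance in `D`. -/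
def qhDist (D : Set X) (x y : X) : ℝ≥0∞ :=
  ⨅ (f : ℝ → X) (_ : IsCurveIn D f x y ∧ eVariationOn f (Icc 0 1) < ⊤),
    qhVariationOn D f (Icc 0 1)

/-- Diameter of a set `A ⊆ D` with respect to the quasihyperbolic metric of `D`. -/
def qhDiam (D : Set X) (A : Set X) : ℝ≥0∞ := ⨆ x ∈ A, ⨆ y ∈ A, qhDist D x y

/-- `D` is a length `a`-John space with center `x₀`: every point can be joined to `x₀`
by an `a`-carrot arc, i.e. `ℓ(α[x,z]) ≤ a · dist(z, ∂D)` for every `z` on the arc. -/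
def IsLengthJohn (D : Set X) (a : ℝ) (x₀ : X) : Prop :=
  ∀ x ∈ D, ∃ f : ℝ → X, IsCurveIn D f x x₀ ∧
    ∀ t ∈ Icc (0 : ℝ) 1, eVariationOn f (Icc 0 t) ≤ ENNReal.ofReal (a * bdist D (f t))

/-- `D` is locally `(lam, c)`-quasiconvex: any two points of `B(x, lam·dist(x,∂D))`
can be joined by a `c`-quasiconvex curve in `D`. -/
def LocQuasiconvex (D : Set X) (lam c : ℝ) : Prop :=
  ∀ x ∈ D, ∀ y ∈ D, ∀ z ∈ D,
    dist y x < lam * bdist D x → dist z x < lam * bdist D x →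
      ∃ f : ℝ → X, IsCurveIn D f y z ∧
        eVariationOn f (Icc 0 1) ≤ ENNReal.ofReal (c * dist y z)

/-- `η` is a quasisymmetry control function: an increasing self-homeomorphism of `[0, ∞)`. -/
structure QSControl (η : ℝ → ℝ) : Prop where
  mono : StrictMonoOn η (Ici 0)
  cont : ContinuousOn η (Ici 0)
  zero : η 0 = 0
  surj : ∀ s : ℝ, 0 ≤ s → ∃ t : ℝ, 0 ≤ t ∧ η t = s

/-- `f` is `η`-quasisymmetric on `D`. -/
def IsQSOn (f : X → Y) (D : Set X) (η : ℝ → ℝ) : Prop :=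
  ∀ x ∈ D, ∀ a ∈ D, ∀ b ∈ D, ∀ t : ℝ, 0 ≤ t →
    dist x a ≤ t * dist x b → dist (f x) (f a) ≤ η t * dist (f x) (f b)

/-- `f` is a homeomorphism from `D` onto `D'` with inverse `g`. -/
def IsHomeoOn (f : X → Y) (g : Y → X) (D : Set X) (D' : Set Y) : Prop :=
  ContinuousOn f D ∧ ContinuousOn g D' ∧ MapsTo f D D' ∧ MapsTo g D' D ∧ InvOn g f D D'

end
namespace QHAux

noncomputable def phi (d a s : ℝ) : ℝ :=
  Real.log (d / (d - min s (a * d / (a + 1)))) +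
    a * Real.log (max s (a * d / (a + 1)) / (a * d / (a + 1)))

variable {d a : ℝ}

lemma c_pos (ha : 1 ≤ a) (hd : 0 < d) : 0 < a * d / (a + 1) := by positivity

lemma c_lt_d (ha : 1 ≤ a) (hd : 0 < d) : a * d / (a + 1) < d := by
  rw [div_lt_iff₀ (by linarith)]; nlinarith

lemma d_sub_c (ha : 1 ≤ a) (hd : 0 < d) :
    d - a * d / (a + 1) = (a * d / (a + 1)) / a := by
  field_simp; ring

lemma stepA (ha : 1 ≤ a) (hd : 0 < d) {p q : ℝ} (hp : 0 ≤ p) (hpq : p ≤ q)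
    (hq : q ≤ a * d / (a + 1)) :
    q - p ≤ (phi d a q - phi d a p) * (d - p) := by
  set c := a * d / (a + 1) with hc
  have hcd : c < d := c_lt_d ha hd
  have h1 : 0 < d - q := by linarith
  have h2 : 0 < d - p := by linarith
  have e1 : min p c = p := min_eq_left (hpq.trans hq)
  have e2 : min q c = q := min_eq_left hq
  have e3 : max p c = c := max_eq_right (hpq.trans hq)
  have e4 : max q c = c := max_eq_right hq
  have hΔ : phi d a q - phi d a p = Real.log ((d - p) / (d - q)) := by
    rw [phi, phi, e1, e2, e3, e4]
    rw [Real.log_div hd.ne' h1.ne', Real.log_div hd.ne' h2.ne',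
        Real.log_div h2.ne' h1.ne']
    ring
  rw [hΔ]
  have hx : 0 < (d - p) / (d - q) := by positivity
  have := Real.one_sub_inv_le_log_of_pos hx
  have hinv : ((d - p) / (d - q))⁻¹ = (d - q) / (d - p) := by
    rw [inv_div]
  rw [hinv] at this
  have := mul_le_mul_of_nonneg_right this h2.le
  calc q - p = (1 - (d - q) / (d - p)) * (d - p) := by field_simp; ring
    _ ≤ Real.log ((d - p) / (d - q)) * (d - p) := this

lemma stepB (ha : 1 ≤ a) (hd : 0 < d) {p q : ℝ} (hpq : p ≤ q)
    (hp : a * d / (a + 1) ≤ p) :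
    q - p ≤ (phi d a q - phi d a p) * (q / a) := by
  set c := a * d / (a + 1) with hc
  have hc0 : 0 < c := c_pos ha hd
  have hp0 : 0 < p := lt_of_lt_of_le hc0 hp
  have hq0 : 0 < q := lt_of_lt_of_le hp0 hpq
  have e1 : min p c = c := min_eq_right hp
  have e2 : min q c = c := min_eq_right (hp.trans hpq)
  have e3 : max p c = p := max_eq_left hp
  have e4 : max q c = q := max_eq_left (hp.trans hpq)
  have hΔ : phi d a q - phi d a p = a * Real.log (q / p) := by
    rw [phi, phi, e1, e2, e3, e4,
        Real.log_div hq0.ne' hc0.ne', Real.log_div hp0.ne' hc0.ne',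
        Real.log_div hq0.ne' hp0.ne']
    ring
  rw [hΔ]
  have hx : 0 < q / p := by positivity
  have := Real.one_sub_inv_le_log_of_pos hx
  have hinv : (q / p)⁻¹ = p / q := by rw [inv_div]
  rw [hinv] at this
  have h := mul_le_mul_of_nonneg_right this hq0.le
  have ha0 : a ≠ 0 := by positivity
  calc q - p = (1 - p / q) * q := by field_simp
    _ ≤ Real.log (q / p) * q := h
    _ = a * Real.log (q / p) * (q / a) := by field_simp

lemma step (ha : 1 ≤ a) (hd : 0 < d) {p q : ℝ} (hp : 0 ≤ p) (hpq : p ≤ q) :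
    q - p ≤ (phi d a q - phi d a p) * max (d - p) (q / a) := by
  set c := a * d / (a + 1) with hc
  have hc0 : 0 < c := c_pos ha hd
  rcases le_total q c with hq | hq
  · have h := stepA ha hd hp hpq hq
    have h2 : 0 < d - p := by linarith [hq.trans_lt (c_lt_d ha hd)]
    have hΔ : 0 ≤ phi d a q - phi d a p := by nlinarith [sub_nonneg.2 hpq]
    calc q - p ≤ (phi d a q - phi d a p) * (d - p) := h
      _ ≤ (phi d a q - phi d a p) * max (d - p) (q / a) :=
        mul_le_mul_of_nonneg_left (le_max_left _ _) hΔ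
  · rcases le_total c p with hp' | hp'
    · have h := stepB ha hd hpq hp'
      have hq0 : 0 < q / a := by
        have : 0 < q := lt_of_lt_of_le (lt_of_lt_of_le hc0 hp') hpq
        positivity
      have hΔ : 0 ≤ phi d a q - phi d a p := by nlinarith [sub_nonneg.2 hpq]
      calc q - p ≤ (phi d a q - phi d a p) * (q / a) := h
        _ ≤ (phi d a q - phi d a p) * max (d - p) (q / a) :=
          mul_le_mul_of_nonneg_left (le_max_right _ _) hΔ
    · -- p ≤ c ≤ q
      have h1 := stepA ha hd hp hp' le_rfl
      have h2 := stepB (q := q) ha hd hq le_rfl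
      have hdp : 0 < d - p := by linarith [c_lt_d ha hd]
      have hqa : 0 < q / a := by
        have : 0 < q := lt_of_lt_of_le hc0 hq
        positivity
      have e1 : 0 ≤ phi d a c - phi d a p := by nlinarith [sub_nonneg.2 hp']
      have e2 : 0 ≤ phi d a q - phi d a c := by nlinarith [sub_nonneg.2 hq]
      have m1 : d - p ≤ max (d - p) (q / a) := le_max_left _ _
      have m2 : q / a ≤ max (d - p) (q / a) := le_max_right _ _
      calc q - p = (c - p) + (q - c) := by ring
        _ ≤ (phi d a c - phi d a p) * (d - p) + (phi d a q - phi d a c) * (q / a) := by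
            gcongr
        _ ≤ (phi d a c - phi d a p) * max (d - p) (q / a)
            + (phi d a q - phi d a c) * max (d - p) (q / a) := by
            gcongr
        _ = (phi d a q - phi d a p) * max (d - p) (q / a) := by ring

lemma phi_mono (ha : 1 ≤ a) (hd : 0 < d) {p q : ℝ} (hp : 0 ≤ p) (hpq : p ≤ q) :
    phi d a p ≤ phi d a q := by
  rcases eq_or_lt_of_le (hp.trans hpq) with h | h
  · have : p = q := le_antisymm hpq (by linarith [hp, h.symm ▸ hpq])
    -- if q = 0 then p = 0
    rw [show p = q by nlinarith]
  · have h := step ha hd hp hpq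
    have hM : 0 < max (d - p) (q / a) := by
      have : 0 < q / a := by positivity
      exact lt_of_lt_of_le this (le_max_right _ _)
    nlinarith [sub_nonneg.2 hpq]

lemma phi_zero (ha : 1 ≤ a) (hd : 0 < d) : phi d a 0 = 0 := by
  have hc0 : 0 < a * d / (a + 1) := c_pos ha hd
  rw [phi, min_eq_left hc0.le, max_eq_right hc0.le]
  simp [div_self hd.ne', div_self hc0.ne']

lemma phi_nonneg (ha : 1 ≤ a) (hd : 0 < d) {p : ℝ} (hp : 0 ≤ p) :
    0 ≤ phi d a p := by
  rw [← phi_zero ha hd]; exact phi_mono ha hd le_rfl hp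

lemma phi_le (ha : 1 ≤ a) (hd : 0 < d) {T dt : ℝ} (hT : 0 ≤ T) (hdt : 0 < dt)
    (hTdt : T ≤ a * dt) :
    phi d a T ≤ a * |Real.log (dt / d)| + (3 + Real.log (2 * a)) * a := by
  set c := a * d / (a + 1) with hc
  have hc0 : 0 < c := c_pos ha hd
  have hcd : c < d := c_lt_d ha hd
  have ha0 : (0:ℝ) < a := by linarith
  have hla : Real.log (a + 1) ≤ a := by
    have := Real.log_le_sub_one_of_pos (x := a + 1) (by linarith)
    linarith
  have hla2 : Real.log (a + 1) ≤ Real.log (2 * a) :=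
    Real.log_le_log (by linarith) (by linarith)
  have hl2a : 0 ≤ Real.log (2 * a) := Real.log_nonneg (by linarith)
  have habs : 0 ≤ |Real.log (dt / d)| := abs_nonneg _
  have hfirst : Real.log (d / (d - min T c)) ≤ Real.log (a + 1) := by
    have h1 : d / (a + 1) ≤ d - min T c := by
      rcases min_le_iff.1 (le_refl (min T c)) with _ | _ <;>
      · have : min T c ≤ c := min_le_right _ _
        have : d - c ≤ d - min T c := by linarith
        have hde : d - c = d / (a + 1) := by rw [hc]; field_simp; ring
        linarith
    have h2 : 0 < d / (a + 1) := by positivity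
    have h3 : d / (d - min T c) ≤ a + 1 := by
      rw [div_le_iff₀ (by linarith)]
      have := mul_le_mul_of_nonneg_left h1 (by linarith : (0:ℝ) ≤ a + 1)
      calc d = (a + 1) * (d / (a + 1)) := by field_simp
        _ ≤ (a + 1) * (d - min T c) := this
    have h0 : 0 < d / (d - min T c) := div_pos hd (by
      have := min_le_right T c; linarith)
    exact Real.log_le_log h0 h3
  rcases le_total T c with hTc | hTc
  · have e : max T c = c := max_eq_right hTc
    rw [phi, e, div_self hc0.ne', Real.log_one, mul_zero, add_zero]
    have := mul_nonneg ha0.le hl2a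
    have := mul_nonneg ha0.le habs
    linarith
  · have e : max T c = T := max_eq_left hTc
    have hT0 : 0 < T := lt_of_lt_of_le hc0 hTc
    have hsec : Real.log (T / c) ≤ Real.log (a + 1) + Real.log (dt / d) := by
      have h1 : T / c ≤ a * dt / c := by gcongr
      have h2 : a * dt / c = (a + 1) * (dt / d) := by
        rw [hc]; field_simp
      have h3 : Real.log (T / c) ≤ Real.log ((a + 1) * (dt / d)) := by
        rw [← h2]; exact Real.log_le_log (by positivity) (by linarith)
      rw [Real.log_mul (by linarith) (by positivity)] at h3
      exact h3
    have hsec2 : Real.log (dt / d) ≤ |Real.log (dt / d)| := le_abs_self _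
    rw [phi, e, ← hc]
    have : a * Real.log (T / c) ≤ a * (Real.log (a + 1) + |Real.log (dt / d)|) := by
      apply mul_le_mul_of_nonneg_left _ ha0.le
      linarith
    have h4 : a * Real.log (a + 1) ≤ a * Real.log (2 * a) :=
      mul_le_mul_of_nonneg_left hla2 ha0.le
    linarith


lemma tele {g : ℕ → ℝ} (hg : Monotone g) :
    ∀ n, ∑ i ∈ Finset.range n, ENNReal.ofReal (g (i + 1) - g i)
      = ENNReal.ofReal (g n - g 0)
  | 0 => by simp
  | (n + 1) => by
    rw [Finset.sum_range_succ, tele hg n,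
      ← ENNReal.ofReal_add (sub_nonneg.2 (hg (Nat.zero_le n)))
        (sub_nonneg.2 (hg (Nat.le_succ n)))]
    congr 1; ring

end QHAux

/-- If `D` is length `a`-John with center `x₀`, then every `x₁ ∈ D` can be
joined to `x₀` by a curve `α` with `ℓ_k(α[x₁,y]) ≤ a·|log(d(y)/d(x₁))| + (3 + log 2a)·a`
for every `y ∈ α`. -/
theorem exists_curve_qhLength_log_bound_of_isLengthJohn
    {X : Type*} [MetricSpace X] (D : Set X) (hDo : IsOpen D) (hbd : Dᶜ.Nonempty)
    (hrc : RectifiablyConnected D) (a : ℝ) (ha : 1 ≤ a) (x₀ : X) (hx₀ : x₀ ∈ D)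
    (hJ : IsLengthJohn D a x₀) :
    ∀ x₁ ∈ D, ∃ f : ℝ → X, IsCurveIn D f x₁ x₀ ∧
      ∀ t ∈ Icc (0 : ℝ) 1, qhVariationOn D f (Icc 0 t) ≤
        ENNReal.ofReal (a * |Real.log (bdist D (f t) / bdist D x₁)| +
          (3 + Real.log (2 * a)) * a) := by
  intro x₁ hx₁
  obtain ⟨f, hf, hJohn⟩ := hJ x₁ hx₁
  refine ⟨f, hf, ?_⟩
  intro t ht
  have ha0 : (0:ℝ) < a := by linarith
  have hbpos : ∀ u ∈ Icc (0:ℝ) 1, 0 < bdist D (f u) := by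
    intro u hu
    have hmem : f u ∉ Dᶜ := by simp [hf.mem u hu]
    exact (hDo.isClosed_compl.notMem_iff_infDist_pos hbd).1 hmem
  have hd₁ : 0 < bdist D x₁ := by
    have : x₁ ∉ Dᶜ := by simp [hx₁]
    exact (hDo.isClosed_compl.notMem_iff_infDist_pos hbd).1 this
  set d₁ := bdist D x₁ with hd₁def
  set V : ℝ → ℝ := fun u => (eVariationOn f (Icc 0 u)).toReal with hVdef
  have hVfin : ∀ u ∈ Icc (0:ℝ) 1, eVariationOn f (Icc 0 u) ≠ ⊤ := fun u hu =>
    ((hJohn u hu).trans_lt ENNReal.ofReal_lt_top).ne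
  have hVnonneg : ∀ u, 0 ≤ V u := fun u => ENNReal.toReal_nonneg
  have hVle : ∀ u ∈ Icc (0:ℝ) 1, V u ≤ a * bdist D (f u) := fun u hu =>
    ENNReal.toReal_le_of_le_ofReal (mul_nonneg ha0.le (hbpos u hu).le) (hJohn u hu)
  have hVmono : ∀ u v : ℝ, 0 ≤ u → u ≤ v → v ≤ 1 → V u ≤ V v := by
    intro u v hu huv hv
    exact ENNReal.toReal_mono (hVfin v ⟨hu.trans huv, hv⟩)
      (eVariationOn.mono f (Icc_subset_Icc le_rfl huv))
  have hsplit : ∀ u v : ℝ, 0 ≤ u → u ≤ v → v ≤ 1 →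
      edist (f u) (f v) ≤ ENNReal.ofReal (V v - V u) := by
    intro u v hu huv hv
    have hadd := eVariationOn.Icc_add_Icc f (s := (univ : Set ℝ)) hu huv (mem_univ u)
    simp only [univ_inter] at hadd
    have hfinv := hVfin v ⟨hu.trans huv, hv⟩
    have hfinu := hVfin u ⟨hu, huv.trans hv⟩
    have hmid : eVariationOn f (Icc u v) ≠ ⊤ := by
      intro h
      rw [h, add_top] at hadd
      exact hfinv hadd.symm
    have hle : edist (f u) (f v) ≤ eVariationOn f (Icc u v) :=
      eVariationOn.edist_le f ⟨le_rfl, huv⟩ ⟨huv, le_rfl⟩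
    have key : eVariationOn f (Icc u v) = ENNReal.ofReal (V v - V u) := by
      rw [← ENNReal.ofReal_toReal hmid]
      congr 1
      have h2 := congrArg ENNReal.toReal hadd
      rw [ENNReal.toReal_add hfinu hmid] at h2
      simp only [hVdef]
      linarith
    exact key ▸ hle
  have hVzero : V 0 = 0 := by
    simp only [hVdef, Set.Icc_self]
    rw [eVariationOn.subsingleton f subsingleton_singleton]
    simp
  rw [qhVariationOn]
  apply iSup_le
  rintro ⟨n, ⟨u, humono, humem⟩⟩
  dsimp only
  have ht1 : t ≤ 1 := ht.2
  have hu01 : ∀ i, u i ∈ Icc (0:ℝ) 1 := fun i =>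
    ⟨(humem i).1, (humem i).2.trans ht1⟩
  have hterm : ∀ i, edist (f (u (i + 1))) (f (u i)) /
      max (ENNReal.ofReal (bdist D (f (u i))))
          (ENNReal.ofReal (bdist D (f (u (i + 1))))) ≤
      ENNReal.ofReal (QHAux.phi d₁ a (V (u (i + 1))) - QHAux.phi d₁ a (V (u i))) := by
    intro i
    set p := V (u i) with hpdef
    set q := V (u (i + 1)) with hqdef
    have hui := hu01 i
    have hui1 := hu01 (i + 1)
    have huu : u i ≤ u (i + 1) := humono (Nat.le_succ i)
    have hp : 0 ≤ p := hVnonneg _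
    have hpq : p ≤ q := hVmono _ _ hui.1 huu hui1.2
    have hM : 0 < max (d₁ - p) (q / a) := by
      rcases lt_or_ge p d₁ with h | h
      · exact lt_of_lt_of_le (by linarith) (le_max_left _ _)
      · have hq0 : 0 < q := lt_of_lt_of_le (hd₁.trans_le h) hpq
        exact lt_of_lt_of_le (by positivity) (le_max_right _ _)
    have hnum : edist (f (u (i + 1))) (f (u i)) ≤ ENNReal.ofReal (q - p) := by
      rw [edist_comm]; exact hsplit _ _ hui.1 huu hui1.2
    have hlow1 : d₁ - p ≤ bdist D (f (u i)) := by
      have hds : dist x₁ (f (u i)) ≤ p := by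
        have h1 := hsplit 0 (u i) le_rfl hui.1 hui.2
        rw [hf.source, hVzero, sub_zero] at h1
        have := ENNReal.toReal_le_of_le_ofReal hp h1
        rwa [← dist_edist] at this
      have h2 := Metric.infDist_le_infDist_add_dist (x := x₁) (y := f (u i)) (s := Dᶜ)
      have h3 : bdist D x₁ ≤ bdist D (f (u i)) + dist x₁ (f (u i)) := h2
      linarith
    have hlow2 : q / a ≤ bdist D (f (u (i + 1))) := by
      rw [div_le_iff₀ ha0]
      have := hVle (u (i + 1)) hui1
      linarith [mul_comm a (bdist D (f (u (i + 1))))]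
    have hden : ENNReal.ofReal (max (d₁ - p) (q / a)) ≤
        max (ENNReal.ofReal (bdist D (f (u i))))
            (ENNReal.ofReal (bdist D (f (u (i + 1))))) := by
      have hmax : max (d₁ - p) (q / a) ≤
          max (bdist D (f (u i))) (bdist D (f (u (i + 1)))) :=
        max_le_max hlow1 hlow2
      calc ENNReal.ofReal (max (d₁ - p) (q / a))
          ≤ ENNReal.ofReal (max (bdist D (f (u i))) (bdist D (f (u (i + 1))))) :=
            ENNReal.ofReal_le_ofReal hmax
        _ = _ := Monotone.map_max (fun _ _ h => ENNReal.ofReal_le_ofReal h)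
    calc edist (f (u (i + 1))) (f (u i)) /
        max (ENNReal.ofReal (bdist D (f (u i))))
            (ENNReal.ofReal (bdist D (f (u (i + 1)))))
        ≤ ENNReal.ofReal (q - p) / ENNReal.ofReal (max (d₁ - p) (q / a)) :=
          ENNReal.div_le_div hnum hden
      _ = ENNReal.ofReal ((q - p) / max (d₁ - p) (q / a)) :=
          (ENNReal.ofReal_div_of_pos hM).symm
      _ ≤ ENNReal.ofReal (QHAux.phi d₁ a q - QHAux.phi d₁ a p) := by
          apply ENNReal.ofReal_le_ofReal
          rw [div_le_iff₀ hM]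
          exact QHAux.step ha hd₁ hp hpq
  have hgmono : Monotone (fun i => QHAux.phi d₁ a (V (u i))) := by
    apply monotone_nat_of_le_succ
    intro i
    exact QHAux.phi_mono ha hd₁ (hVnonneg _)
      (hVmono _ _ (hu01 i).1 (humono (Nat.le_succ i)) (hu01 (i + 1)).2)
  calc ∑ i ∈ Finset.range n, edist (f (u (i + 1))) (f (u i)) /
        max (ENNReal.ofReal (bdist D (f (u i))))
            (ENNReal.ofReal (bdist D (f (u (i + 1)))))
      ≤ ∑ i ∈ Finset.range n,
          ENNReal.ofReal (QHAux.phi d₁ a (V (u (i + 1))) - QHAux.phi d₁ a (V (u i))) :=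
        Finset.sum_le_sum fun i _ => hterm i
    _ = ENNReal.ofReal (QHAux.phi d₁ a (V (u n)) - QHAux.phi d₁ a (V (u 0))) :=
        QHAux.tele hgmono n
    _ ≤ ENNReal.ofReal (a * |Real.log (bdist D (f t) / d₁)| +
          (3 + Real.log (2 * a)) * a) := by
        apply ENNReal.ofReal_le_ofReal
        have h0 : 0 ≤ QHAux.phi d₁ a (V (u 0)) :=
          QHAux.phi_nonneg ha hd₁ (hVnonneg _)
        have h1 : QHAux.phi d₁ a (V (u n)) ≤ QHAux.phi d₁ a (V t) :=
          QHAux.phi_mono ha hd₁ (hVnonneg _)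
            (hVmono _ _ (hu01 n).1 (humem n).2 ht1)
        have h2 : QHAux.phi d₁ a (V t) ≤
            a * |Real.log (bdist D (f t) / d₁)| + (3 + Real.log (2 * a)) * a :=
          QHAux.phi_le ha hd₁ (hVnonneg _) (hbpos t ht) (hVle t ht)
        linarith
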